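/- Let γ ∈ (0,1/2], r ≥ 2, and let i ≥ 1 be an integer. Let Y be a bounded diagonal operator with ‖Y‖_{∞,γ} := sup_n n^{2γ}‖Y P_n‖ < ∞, and let F be a bounded operator with ‖F‖_{r,iγ} < ∞. Then the commutator [F,Y] = FY − YF satisfies ‖[F,Y]‖_{r−1,(i+1)γ} ≤ 4·‖F‖_{r,iγ}·‖Y‖_{∞,γ}. -/
import Mathlib


noncomputable section

open ContinuousLinearMap

variable {𝓗 : Type*} [NormedAddCommGroup 𝓗] [InnerProductSpace ℂ 𝓗] [CompleteSpace 𝓗]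

/-- `⟨x⟩ := max {1, |x|}`. -/
def jap (x : ℝ) : ℝ := max 1 |x|

/-- `(Pₙ)_{n≥1}` is a family of mutually orthogonal nonzero orthogonal projections
with `Σₙ Pₙ = I` in the strong sense. -/
def ProjFamily (P : ℕ+ → 𝓗 →L[ℂ] 𝓗) : Prop :=
  (∀ n, IsSelfAdjoint (P n)) ∧ (∀ n, (P n).comp (P n) = P n) ∧
  (∀ m n, m ≠ n → (P m).comp (P n) = 0) ∧ (∀ n, P n ≠ 0) ∧
  (∀ ψ : 𝓗, HasSum (fun n => P n ψ) ψ)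

/-- The quantity `⟨m-n⟩^p · max{m,n}^(2δ) · ‖Pₘ A Pₙ‖`; the norm `‖A‖_{p,δ}` is its
supremum over `m, n ≥ 1`. -/
def wnorm (P : ℕ+ → 𝓗 →L[ℂ] 𝓗) (p δ : ℝ) (A : 𝓗 →L[ℂ] 𝓗) (m n : ℕ+) : ℝ :=
  jap (((m : ℕ) : ℝ) - ((n : ℕ) : ℝ)) ^ p * (((max m n : ℕ+) : ℕ) : ℝ) ^ (2 * δ) *
    ‖(P m).comp (A.comp (P n))‖

/-- `A` is diagonal with respect to the family `P`. -/
def IsDiag (P : ℕ+ → 𝓗 →L[ℂ] 𝓗) (A : 𝓗 →L[ℂ] 𝓗) : Prop :=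
  ∀ m n, m ≠ n → (P m).comp (A.comp (P n)) = 0

/-- `Dom(H) = {ψ : Σₙ Eₙ²‖Pₙψ‖² < ∞}`. -/
def HDom (P : ℕ+ → 𝓗 →L[ℂ] 𝓗) (E : ℕ+ → ℝ) : Set 𝓗 :=
  {ψ | Summable fun n => (E n) ^ 2 * ‖P n ψ‖ ^ 2}

/-- The form domain `Q_H = {ψ : Σₙ Eₙ‖Pₙψ‖² < ∞}`. -/
def QDom (P : ℕ+ → 𝓗 →L[ℂ] 𝓗) (E : ℕ+ → ℝ) : Set 𝓗 :=
  {ψ | Summable fun n => E n * ‖P n ψ‖ ^ 2}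

/-- `h = Hψ`, i.e. `h = Σₙ Eₙ Pₙ ψ`. -/
def IsHSum (P : ℕ+ → 𝓗 →L[ℂ] 𝓗) (E : ℕ+ → ℝ) (ψ h : 𝓗) : Prop :=
  HasSum (fun n => (E n : ℂ) • P n ψ) h

/-- `U` is unitary. -/
def IsUnitaryOp (U : 𝓗 →L[ℂ] 𝓗) : Prop := U * star U = 1 ∧ star U * U = 1

/-- A family of bounded operators which is `C¹` in the strong sense. -/
def StrongC1 (V : ℝ → 𝓗 →L[ℂ] 𝓗) : Prop := ∀ ψ : 𝓗, ContDiff ℝ 1 fun t => V t ψ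

/-- `U(t,s)` is a propagator for `H + V(t)`. -/
def IsPropagator (P : ℕ+ → 𝓗 →L[ℂ] 𝓗) (E : ℕ+ → ℝ) (V : ℝ → 𝓗 →L[ℂ] 𝓗)
    (U : ℝ → ℝ → 𝓗 →L[ℂ] 𝓗) : Prop :=
  (∀ t s, IsUnitaryOp (U t s)) ∧
  (∀ ψ : 𝓗, Continuous fun ts : ℝ × ℝ => U ts.1 ts.2 ψ) ∧
  (∀ t, U t t = 1) ∧
  (∀ t s r, (U t s).comp (U s r) = U t r) ∧
  (∀ t s, ⇑(U t s) '' HDom P E = HDom P E) ∧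
  (∀ s : ℝ, ∀ ψ ∈ HDom P E, ∀ t : ℝ, ∃ d : 𝓗,
    HasDerivAt (fun τ => U τ s ψ) d t ∧
    ∀ h : 𝓗, IsHSum P E (U t s ψ) h → Complex.I • d = h + V t (U t s ψ))

/-- The Riemann zeta function `ζ(s) = Σ_{n≥1} n^{-s}` (for real `s > 1`). -/
def rzeta (s : ℝ) : ℝ := ∑' n : ℕ+, (((n : ℕ) : ℝ) ^ s)⁻¹

/-- The constant `C_p = 2^(p+1) (1 + 2 ζ(p-1))`. -/
def Cconst (p : ℝ) : ℝ := 2 ^ (p + 1) * (1 + 2 * rzeta (p - 1))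

set_option maxHeartbeats 1000000 in
/-- estimate on `[F,Y]` for diagonal `Y`, from the proof of
Proposition 4.1: `‖[F,Y]‖_{r-1,(i+1)γ} ≤ 4 ‖F‖_{r,iγ} ‖Y‖_{∞,γ}`. -/
theorem statement19
    (P : ℕ+ → 𝓗 →L[ℂ] 𝓗) (hP : ProjFamily P)
    (γ : ℝ) (hγ0 : 0 < γ) (hγh : γ ≤ 1 / 2)
    (r : ℝ) (hr : 2 ≤ r) (k : ℕ) (hk : 1 ≤ k)
    (Y : 𝓗 →L[ℂ] 𝓗) (hYd : IsDiag P Y)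
    (y : ℝ) (hY : ∀ n : ℕ+, ((n : ℕ) : ℝ) ^ (2 * γ) * ‖Y.comp (P n)‖ ≤ y)
    (F : 𝓗 →L[ℂ] 𝓗) (f : ℝ)
    (hF : ∀ m n : ℕ+, wnorm P r ((k : ℝ) * γ) F m n ≤ f) :
    ∀ m n : ℕ+,
      wnorm P (r - 1) (((k : ℝ) + 1) * γ) (F.comp Y - Y.comp F) m n ≤ 4 * f * y := by
  obtain ⟨hsa, hid, horth, hne, hsum⟩ := hP
  have hy0 : 0 ≤ y := by
    refine le_trans ?_ (hY 1)
    positivity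
  have hf0 : 0 ≤ f := by
    refine le_trans ?_ (hF 1 1)
    unfold wnorm jap
    positivity
  -- `Y Pⱼ = Pⱼ Y Pⱼ`
  have hYP : ∀ j : ℕ+, Y.comp (P j) = (P j).comp (Y.comp (P j)) := by
    intro j
    ext ψ
    have h1 : HasSum (fun kk : ℕ+ => P kk (Y (P j ψ))) (Y (P j ψ)) := hsum _
    have h2 : HasSum (fun kk : ℕ+ => P kk (Y (P j ψ))) (P j (Y (P j ψ))) := by
      have h0 : ∀ kk : ℕ+, kk ≠ j → P kk (Y (P j ψ)) = 0 := by
        intro kk hkk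
        have h := hYd kk j hkk
        have := congrFun (congrArg DFunLike.coe h) ψ
        simpa using this
      simpa using hasSum_single (f := fun kk : ℕ+ => P kk (Y (P j ψ))) j h0
    simpa using h1.unique h2
  -- `Pⱼ Y = Y Pⱼ`
  have hcomm : ∀ j : ℕ+, ∀ ψ : 𝓗, P j (Y ψ) = Y (P j ψ) := by
    intro j ψ
    have h1 : HasSum (fun kk : ℕ+ => P j (Y (P kk ψ))) (P j (Y ψ)) := by
      simpa using ((P j).comp Y).hasSum (hsum ψ)
    have h2 : HasSum (fun kk : ℕ+ => P j (Y (P kk ψ))) (P j (Y (P j ψ))) := by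
      have h0 : ∀ kk : ℕ+, kk ≠ j → P j (Y (P kk ψ)) = 0 := by
        intro kk hkk
        have hA := congrFun (congrArg DFunLike.coe (hYP kk)) ψ
        simp only [ContinuousLinearMap.comp_apply] at hA
        have hB := congrFun (congrArg DFunLike.coe (horth j kk hkk.symm)) (Y (P kk ψ))
        simp only [ContinuousLinearMap.comp_apply, ContinuousLinearMap.zero_apply] at hB
        rw [hA, hB]
      exact hasSum_single (f := fun kk : ℕ+ => P j (Y (P kk ψ))) j h0
    have h3 := h1.unique h2
    have hA := congrFun (congrArg DFunLike.coe (hYP j)) ψ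
    simp only [ContinuousLinearMap.comp_apply] at hA
    rw [h3, ← hA]
  intro m n
  -- decomposition of the commutator block
  have hCid : (P m).comp ((F.comp Y - Y.comp F).comp (P n)) =
      ((P m).comp (F.comp (P n))).comp (Y.comp (P n)) -
      (Y.comp (P m)).comp ((P m).comp (F.comp (P n))) := by
    ext ψ
    simp only [ContinuousLinearMap.comp_apply, ContinuousLinearMap.sub_apply,
      ContinuousLinearMap.comp_apply, map_sub]
    have hA := congrFun (congrArg DFunLike.coe (hYP n)) ψ
    simp only [ContinuousLinearMap.comp_apply] at hA
    have hB := hcomm m (F (P n ψ))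
    have hidm := congrFun (congrArg DFunLike.coe (hid m)) (F (P n ψ))
    simp only [ContinuousLinearMap.comp_apply] at hidm
    rw [← hA, hB, hidm]
  have hCnorm : ‖(P m).comp ((F.comp Y - Y.comp F).comp (P n))‖ ≤
      ‖(P m).comp (F.comp (P n))‖ * (‖Y.comp (P n)‖ + ‖Y.comp (P m)‖) := by
    rw [hCid]
    refine (norm_sub_le _ _).trans ?_
    have t1 := ContinuousLinearMap.opNorm_comp_le ((P m).comp (F.comp (P n))) (Y.comp (P n))
    have t2 := ContinuousLinearMap.opNorm_comp_le (Y.comp (P m)) ((P m).comp (F.comp (P n)))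
    nlinarith [norm_nonneg ((P m).comp (F.comp (P n))), norm_nonneg (Y.comp (P n)),
      norm_nonneg (Y.comp (P m))]
  -- notation
  set a : ℝ := jap (((m : ℕ) : ℝ) - ((n : ℕ) : ℝ)) with ha
  set M : ℝ := (((max m n : ℕ+) : ℕ) : ℝ) with hM
  set nr : ℝ := ((n : ℕ) : ℝ) with hnr
  set mr : ℝ := ((m : ℕ) : ℝ) with hmr
  set nF : ℝ := ‖(P m).comp (F.comp (P n))‖ with hnF
  set cn : ℝ := ‖Y.comp (P n)‖ with hcn
  set cm : ℝ := ‖Y.comp (P m)‖ with hcm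
  have ha1 : (1 : ℝ) ≤ a := le_max_left _ _
  have ha0 : (0 : ℝ) < a := lt_of_lt_of_le one_pos ha1
  have hnr1 : (1 : ℝ) ≤ nr := by rw [hnr]; exact Nat.one_le_cast.mpr n.pos
  have hmr1 : (1 : ℝ) ≤ mr := by rw [hmr]; exact Nat.one_le_cast.mpr m.pos
  have habs : |mr - nr| ≤ a := le_max_right _ _
  have hMcast : M = max mr nr := by
    rcases le_total m n with h | h
    · have h' : (m : ℕ) ≤ (n : ℕ) := h
      have h'' : ((m : ℕ) : ℝ) ≤ ((n : ℕ) : ℝ) := Nat.cast_le.mpr h'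
      rw [hM, hnr, hmr, max_eq_right h, max_eq_right h'']
    · have h' : (n : ℕ) ≤ (m : ℕ) := h
      have h'' : ((n : ℕ) : ℝ) ≤ ((m : ℕ) : ℝ) := Nat.cast_le.mpr h'
      rw [hM, hnr, hmr, max_eq_left h, max_eq_left h'']
  have hM1 : (1 : ℝ) ≤ M := by rw [hMcast]; exact le_trans hmr1 (le_max_left _ _)
  have hM0 : (0 : ℝ) < M := lt_of_lt_of_le one_pos hM1
  -- key inequality `M^{2γ} ≤ 2 a t^{2γ}` for `t = nr, mr`
  have key : ∀ t : ℝ, 1 ≤ t → M ≤ t + |mr - nr| → M ^ (2 * γ) ≤ 2 * a * t ^ (2 * γ) := by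
    intro t ht hMt
    have hMle : M ≤ 2 * a * t := by
      have h1 : 0 ≤ (t - 1) * a := mul_nonneg (by linarith) (by linarith)
      have h2 : 0 ≤ t * (a - 1) := mul_nonneg (by linarith) (by linarith)
      nlinarith
    calc M ^ (2 * γ) ≤ (2 * a * t) ^ (2 * γ) :=
          Real.rpow_le_rpow (le_of_lt hM0) hMle (by linarith)
      _ = (2 * a) ^ (2 * γ) * t ^ (2 * γ) := Real.mul_rpow (by linarith) (by linarith)
      _ ≤ (2 * a) ^ (1 : ℝ) * t ^ (2 * γ) := by
          have h1 : (1 : ℝ) ≤ 2 * a := by linarith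
          have h2 : 2 * γ ≤ (1 : ℝ) := by linarith
          have := Real.rpow_le_rpow_of_exponent_le h1 h2
          have ht0 : (0 : ℝ) ≤ t ^ (2 * γ) := Real.rpow_nonneg (by linarith) _
          exact mul_le_mul_of_nonneg_right this ht0
      _ = 2 * a * t ^ (2 * γ) := by rw [Real.rpow_one]
  have keyn : M ^ (2 * γ) ≤ 2 * a * nr ^ (2 * γ) := by
    refine key nr hnr1 ?_
    rw [hMcast]
    rcases le_total mr nr with h | h
    · rw [max_eq_right h]; linarith [abs_nonneg (mr - nr)]
    · rw [max_eq_left h]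
      have : |mr - nr| = mr - nr := abs_of_nonneg (by linarith)
      linarith
  have keym : M ^ (2 * γ) ≤ 2 * a * mr ^ (2 * γ) := by
    refine key mr hmr1 ?_
    rw [hMcast]
    rcases le_total mr nr with h | h
    · rw [max_eq_right h]
      have : |mr - nr| = nr - mr := by rw [abs_sub_comm]; exact abs_of_nonneg (by linarith)
      linarith
    · rw [max_eq_left h]; linarith [abs_nonneg (mr - nr)]
  -- the `F` bound
  have hW : a ^ r * M ^ (2 * ((k : ℝ) * γ)) * nF ≤ f := hF m n
  have hyn : nr ^ (2 * γ) * cn ≤ y := hY n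
  have hym : mr ^ (2 * γ) * cm ≤ y := hY m
  -- exponent arithmetic
  have hsplit : M ^ (2 * (((k : ℝ) + 1) * γ)) = M ^ (2 * ((k : ℝ) * γ)) * M ^ (2 * γ) := by
    rw [← Real.rpow_add hM0]; ring_nf
  have har : a ^ (r - 1) * a = a ^ r := by
    rw [← Real.rpow_add_one (ne_of_gt ha0)]
    norm_num
  -- nonnegativity
  have hnF0 : 0 ≤ nF := norm_nonneg _
  have hcn0 : 0 ≤ cn := norm_nonneg _
  have hcm0 : 0 ≤ cm := norm_nonneg _
  have hMk0 : (0 : ℝ) ≤ M ^ (2 * ((k : ℝ) * γ)) := Real.rpow_nonneg (le_of_lt hM0) _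
  have har0 : (0 : ℝ) ≤ a ^ (r - 1) := Real.rpow_nonneg (le_of_lt ha0) _
  -- putting everything together
  show a ^ (r - 1) * M ^ (2 * (((k : ℝ) + 1) * γ)) * ‖(P m).comp ((F.comp Y - Y.comp F).comp (P n))‖ ≤ 4 * f * y
  calc a ^ (r - 1) * M ^ (2 * (((k : ℝ) + 1) * γ)) *
        ‖(P m).comp ((F.comp Y - Y.comp F).comp (P n))‖
      ≤ a ^ (r - 1) * M ^ (2 * (((k : ℝ) + 1) * γ)) * (nF * (cn + cm)) := by
        have h0 : (0 : ℝ) ≤ a ^ (r - 1) * M ^ (2 * (((k : ℝ) + 1) * γ)) :=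
          mul_nonneg (Real.rpow_nonneg (le_of_lt ha0) _)
            (Real.rpow_nonneg (le_of_lt hM0) _)
        exact mul_le_mul_of_nonneg_left hCnorm h0
    _ = (a ^ (r - 1) * M ^ (2 * ((k : ℝ) * γ)) * nF) * (M ^ (2 * γ) * cn) +
        (a ^ (r - 1) * M ^ (2 * ((k : ℝ) * γ)) * nF) * (M ^ (2 * γ) * cm) := by
        rw [hsplit]; ring
    _ ≤ (a ^ (r - 1) * M ^ (2 * ((k : ℝ) * γ)) * nF) * (2 * a * (nr ^ (2 * γ) * cn)) +
        (a ^ (r - 1) * M ^ (2 * ((k : ℝ) * γ)) * nF) * (2 * a * (mr ^ (2 * γ) * cm)) := by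
        have hx : (0 : ℝ) ≤ a ^ (r - 1) * M ^ (2 * ((k : ℝ) * γ)) * nF :=
          mul_nonneg (mul_nonneg har0 hMk0) hnF0
        refine add_le_add (mul_le_mul_of_nonneg_left ?_ hx) (mul_le_mul_of_nonneg_left ?_ hx)
        · calc M ^ (2 * γ) * cn ≤ 2 * a * nr ^ (2 * γ) * cn :=
                mul_le_mul_of_nonneg_right keyn hcn0
            _ = 2 * a * (nr ^ (2 * γ) * cn) := by ring
        · calc M ^ (2 * γ) * cm ≤ 2 * a * mr ^ (2 * γ) * cm :=
                mul_le_mul_of_nonneg_right keym hcm0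
            _ = 2 * a * (mr ^ (2 * γ) * cm) := by ring
    _ ≤ (a ^ (r - 1) * M ^ (2 * ((k : ℝ) * γ)) * nF) * (2 * a * y) +
        (a ^ (r - 1) * M ^ (2 * ((k : ℝ) * γ)) * nF) * (2 * a * y) := by
        have hx : (0 : ℝ) ≤ a ^ (r - 1) * M ^ (2 * ((k : ℝ) * γ)) * nF :=
          mul_nonneg (mul_nonneg har0 hMk0) hnF0
        refine add_le_add (mul_le_mul_of_nonneg_left ?_ hx) (mul_le_mul_of_nonneg_left ?_ hx)
        · exact mul_le_mul_of_nonneg_left hyn (by linarith)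
        · exact mul_le_mul_of_nonneg_left hym (by linarith)
    _ = 4 * (a ^ (r - 1) * a * M ^ (2 * ((k : ℝ) * γ)) * nF) * y := by ring
    _ = 4 * (a ^ r * M ^ (2 * ((k : ℝ) * γ)) * nF) * y := by rw [har]
    _ ≤ 4 * f * y := by
        nlinarith [mul_le_mul_of_nonneg_right hW hy0]
end
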